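/- In the algebra U_q⁺(B₂), assuming q⁴ ≠ 1, for every integer k ≥ 2 the following identity holds: e₂ᵏ·e₁ = q^{-2k}·e₁·e₂ᵏ − q⁻²·B_k·e₃·e₂ᵏ⁻¹ − C_k·z·e₂ᵏ⁻², where B_k = (q^{2k} − q^{-2k})/(q² − q⁻²) and C_k = q^{-2(k-1)}·(q^{2k} − 1)(q^{2(k-1)} − 1)/((q⁴ − 1)(q² − 1)). -/

import Mathlib

open FreeAlgebra

/-- The defining relations of `U_q⁺(B₂)`: generators `0 ↦ e₁`, `1 ↦ e₂`, `2 ↦ e₃`,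
`3 ↦ z` subject to `eᵢz = zeᵢ`, `e₁e₃ = q⁻²e₃e₁`, `e₂e₁ = q⁻²e₁e₂ - q⁻²e₃`,
`e₂e₃ = q²e₃e₂ + z`. -/
inductive UqB2Rel (k : Type*) [Field k] (q : k) :
    FreeAlgebra k (Fin 4) → FreeAlgebra k (Fin 4) → Prop
  | e1z : UqB2Rel k q (ι k (0 : Fin 4) * ι k (3 : Fin 4)) (ι k (3 : Fin 4) * ι k (0 : Fin 4))
  | e2z : UqB2Rel k q (ι k (1 : Fin 4) * ι k (3 : Fin 4)) (ι k (3 : Fin 4) * ι k (1 : Fin 4))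
  | e3z : UqB2Rel k q (ι k (2 : Fin 4) * ι k (3 : Fin 4)) (ι k (3 : Fin 4) * ι k (2 : Fin 4))
  | e1e3 : UqB2Rel k q (ι k (0 : Fin 4) * ι k (2 : Fin 4))
      ((q ^ 2)⁻¹ • (ι k (2 : Fin 4) * ι k (0 : Fin 4)))
  | e2e1 : UqB2Rel k q (ι k (1 : Fin 4) * ι k (0 : Fin 4))
      ((q ^ 2)⁻¹ • (ι k (0 : Fin 4) * ι k (1 : Fin 4)) - (q ^ 2)⁻¹ • ι k (2 : Fin 4))
  | e2e3 : UqB2Rel k q (ι k (1 : Fin 4) * ι k (2 : Fin 4))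
      (q ^ 2 • (ι k (2 : Fin 4) * ι k (1 : Fin 4)) + ι k (3 : Fin 4))

lemma uqb2_main (k : Type*) [Field k] (q : k) (hq : q ≠ 0) (hq4 : q ^ 4 ≠ 1)
    (n : ℕ) (hn : 2 ≤ n) :
    (RingQuot.mkAlgHom k (UqB2Rel k q) (ι k (1 : Fin 4))) ^ n *
        RingQuot.mkAlgHom k (UqB2Rel k q) (ι k (0 : Fin 4)) =
      ((q ^ 2)⁻¹) ^ n • (RingQuot.mkAlgHom k (UqB2Rel k q) (ι k (0 : Fin 4)) *
          RingQuot.mkAlgHom k (UqB2Rel k q) (ι k (1 : Fin 4)) ^ n) +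
      (-((q ^ 2)⁻¹ * (((q ^ 2) ^ n - ((q ^ 2) ^ n)⁻¹) / (q ^ 2 - (q ^ 2)⁻¹)))) •
        (RingQuot.mkAlgHom k (UqB2Rel k q) (ι k (2 : Fin 4)) *
          RingQuot.mkAlgHom k (UqB2Rel k q) (ι k (1 : Fin 4)) ^ (n - 1)) +
      (-(((q ^ 2) ^ (n - 1))⁻¹ * (((q ^ 2) ^ n - 1) * ((q ^ 2) ^ (n - 1) - 1)) /
          (((q ^ 2) ^ 2 - 1) * (q ^ 2 - 1)))) •
        (RingQuot.mkAlgHom k (UqB2Rel k q) (ι k (3 : Fin 4)) *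
          RingQuot.mkAlgHom k (UqB2Rel k q) (ι k (1 : Fin 4)) ^ (n - 2)) := by
  set e1 := RingQuot.mkAlgHom k (UqB2Rel k q) (ι k (0 : Fin 4)) with he1
  set e2 := RingQuot.mkAlgHom k (UqB2Rel k q) (ι k (1 : Fin 4)) with he2
  set e3 := RingQuot.mkAlgHom k (UqB2Rel k q) (ι k (2 : Fin 4)) with he3
  set z := RingQuot.mkAlgHom k (UqB2Rel k q) (ι k (3 : Fin 4)) with hz
  have h21 : e2 * e1 = (q ^ 2)⁻¹ • (e1 * e2) - (q ^ 2)⁻¹ • e3 := by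
    have := RingQuot.mkAlgHom_rel k (UqB2Rel.e2e1 (k := k) (q := q))
    simpa [map_mul, map_sub, map_smul, he1, he2, he3] using this
  have h23 : e2 * e3 = (q ^ 2) • (e3 * e2) + z := by
    have := RingQuot.mkAlgHom_rel k (UqB2Rel.e2e3 (k := k) (q := q))
    simpa [map_mul, map_add, map_smul, he2, he3, hz] using this
  have h2z : e2 * z = z * e2 := by
    have := RingQuot.mkAlgHom_rel k (UqB2Rel.e2z (k := k) (q := q))
    simpa [map_mul, he2, hz] using this
  have ht : (q : k) ^ 2 ≠ 0 := pow_ne_zero _ hq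
  have h41 : (q : k) ^ 2 * (q ^ 2) - 1 ≠ 0 := by
    intro h
    apply hq4
    have : (q : k) ^ 4 = q ^ 2 * q ^ 2 := by ring
    rw [this, sub_eq_zero.mp h]
  have h1 : (q : k) ^ 2 - 1 ≠ 0 := by
    intro h
    apply hq4
    have h' := sub_eq_zero.mp h
    have : (q : k) ^ 4 = q ^ 2 * q ^ 2 := by ring
    rw [this, h']; ring
  have h41' : ((q : k) ^ 2) ^ 2 - 1 ≠ 0 := by
    intro h; apply h41; rw [← h]; ring
  have hd : (q : k) ^ 2 - (q ^ 2)⁻¹ ≠ 0 := by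
    have : (q : k) ^ 2 - (q ^ 2)⁻¹ = (q ^ 2 * q ^ 2 - 1) / q ^ 2 := by
      field_simp
    rw [this]
    exact div_ne_zero h41 ht
  induction n, hn using Nat.le_induction with
  | base =>
    have e22 : e2 ^ 2 * e1 = e2 * (e2 * e1) := by rw [pow_two, mul_assoc]
    rw [e22, h21, mul_sub, mul_smul_comm, mul_smul_comm, ← mul_assoc, h21, h23,
      sub_mul, smul_mul_assoc, smul_mul_assoc, mul_assoc, ← pow_two]
    simp only [show 2 - 1 = 1 from rfl, show 2 - 2 = 0 from rfl, pow_one, pow_zero, mul_one]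
    match_scalars
    · field_simp [hq, ht, h1, h41', hd]
    · field_simp [hq, ht, h1, h41', hd]
      ring
    · field_simp [hq, ht, h1, h41', hd]
  | succ n hn ih =>
    obtain ⟨p, rfl⟩ : ∃ p, n = p + 2 := ⟨n - 2, by omega⟩
    simp only [show p + 2 - 1 = p + 1 from rfl, Nat.add_sub_cancel,
      show p + 2 + 1 - 1 = p + 2 from rfl, show p + 2 + 1 - 2 = p + 1 from rfl] at ih ⊢
    have hpow : e2 ^ (p + 2 + 1) = e2 * e2 ^ (p + 2) := pow_succ' e2 (p + 2)
    conv_lhs => rw [hpow, mul_assoc, ih]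
    rw [mul_add, mul_add, mul_smul_comm, mul_smul_comm, mul_smul_comm]
    have hA : e2 * (e1 * e2 ^ (p + 2)) =
        (q ^ 2)⁻¹ • (e1 * e2 ^ (p + 2 + 1)) - (q ^ 2)⁻¹ • (e3 * e2 ^ (p + 2)) := by
      rw [← mul_assoc, h21, sub_mul, smul_mul_assoc, smul_mul_assoc, mul_assoc, ← pow_succ']
    have hB : e2 * (e3 * e2 ^ (p + 1)) =
        (q ^ 2) • (e3 * e2 ^ (p + 2)) + z * e2 ^ (p + 1) := by
      rw [← mul_assoc, h23, add_mul, smul_mul_assoc, mul_assoc, ← pow_succ']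
    have hC : e2 * (z * e2 ^ p) = z * e2 ^ (p + 1) := by
      rw [← mul_assoc, h2z, mul_assoc, ← pow_succ']
    rw [hA, hB, hC]
    match_scalars
    · simp only [inv_pow]
      field_simp [hq, ht, h1, h41', hd]
      ring
    · simp only [inv_pow]
      field_simp [hq, ht, h1, h41', hd]
      ring
    · field_simp [hq, ht, h1, h41', hd]
      ring

/-- In `U_q⁺(B₂)` with `q⁴ ≠ 1`, for every `m ≥ 2`:
`e₂ᵐ e₁ = q^{-2m} e₁ e₂ᵐ - q⁻² B_m e₃ e₂ᵐ⁻¹ - C_m z e₂ᵐ⁻²`, where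
`B_m = (q^{2m} - q^{-2m})/(q² - q⁻²)` and
`C_m = q^{-2(m-1)} (q^{2m} - 1)(q^{2(m-1)} - 1)/((q⁴ - 1)(q² - 1))`. -/
theorem uqb2_identity_e2k_e1 (k : Type*) [Field k] (q : k) (hq : q ≠ 0)
    (hq4 : q ^ 4 ≠ 1) (m : ℕ) (hm : 2 ≤ m) :
    let e1 := RingQuot.mkAlgHom k (UqB2Rel k q) (ι k (0 : Fin 4))
    let e2 := RingQuot.mkAlgHom k (UqB2Rel k q) (ι k (1 : Fin 4))
    let e3 := RingQuot.mkAlgHom k (UqB2Rel k q) (ι k (2 : Fin 4))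
    let z := RingQuot.mkAlgHom k (UqB2Rel k q) (ι k (3 : Fin 4))
    let B : k := (q ^ (2 * m) - (q ^ (2 * m))⁻¹) / (q ^ 2 - (q ^ 2)⁻¹)
    let C : k := (q ^ (2 * (m - 1)))⁻¹ *
      ((q ^ (2 * m) - 1) * (q ^ (2 * (m - 1)) - 1)) / ((q ^ 4 - 1) * (q ^ 2 - 1))
    e2 ^ m * e1 = ((q ^ 2)⁻¹) ^ m • (e1 * e2 ^ m) -
        ((q ^ 2)⁻¹ * B) • (e3 * e2 ^ (m - 1)) - C • (z * e2 ^ (m - 2)) := by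
  intro e1 e2 e3 z B C
  simp only [B, C, e1, e2, e3, z]
  rw [pow_mul q 2 m, pow_mul q 2 (m - 1), show (q : k) ^ 4 = (q ^ 2) ^ 2 from by ring]
  rw [uqb2_main k q hq hq4 m hm]
  module
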